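/- arXiv:1501.06032 — 2 statements merged into one kernel-verified Lean document; each statement's English description precedes it below -/
import Mathlib

section
/- Lemma (interpolation preserves LMI feasibility). Fix ρ ∈ Γ and the data A(ρ), B₁, B₂, R, Q̄, N, the matrices C_{ij}, and the index sets S_i^φ, d_i, d̄_i. Suppose the two tuples (Y₁, {ν_{ij}¹}, {μ_{ij}¹}, {ν_{i0}¹}, {μ_{0i}¹}) and (Y₂, {ν_{ij}²}, {μ_{ij}²}, {ν_{i0}²}, {μ_{0i}²}), each consisting of a symmetric positive definite n×n matrix and positive scalars, satisfy Υ_i < 0 for every i = 1,…,N. Then for every γ ∈ [0,1] the interpolated tuple defined by Y_γ = γY₁ + (1−γ)Y₂, ν_{ij,γ} = (γ(ν_{ij}¹)⁻¹ + (1−γ)(ν_{ij}²)⁻¹)⁻¹, μ_{ij,γ} = (γ(μ_{ij}¹)⁻¹ + (1−γ)(μ_{ij}²)⁻¹)⁻¹, ν_{i0,γ} = (γ(ν_{i0}¹)⁻¹ + (1−γ)(ν_{i0}²)⁻¹)⁻¹ (for i with d_i = 1), and μ_{0i,γ} = (γ(μ_{0i}¹)⁻¹ + (1−γ)(μ_{0i}²)⁻¹)⁻¹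 (for i with d̄_i = 1) also satisfies Υ_i < 0 for every i = 1,…,N. -/
open Matrix BigOperators

namespace LFT

variable (n p m N : ℕ)

abbrev inIdx (S : Fin N → Finset (Fin N)) (q : Fin N → Fin N → ℕ) (i : Fin N) : Type :=
  Σ j : {j // j ∈ S i}, Fin (q i j.1)

abbrev outIdx (S : Fin N → Finset (Fin N)) (q : Fin N → Fin N → ℕ) (i : Fin N) : Type :=
  Σ r : {r // i ∈ S r}, Fin (q r.1 i)

def Chat (S : Fin N → Finset (Fin N)) (q : Fin N → Fin N → ℕ)
    (C : ∀ i j : Fin N, Matrix (Fin (q i j)) (Fin n) ℝ) (i : Fin N) :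
    Matrix (inIdx N S q i) (Fin n) ℝ :=
  Matrix.of fun jk b => C i jk.1.1 jk.2 b

def Cbar (S : Fin N → Finset (Fin N)) (q : Fin N → Fin N → ℕ)
    (C : ∀ i j : Fin N, Matrix (Fin (q i j)) (Fin n) ℝ) (i : Fin N) :
    Matrix (outIdx N S q i) (Fin n) ℝ :=
  Matrix.of fun rk b => C rk.1.1 i rk.2 b

noncomputable def Phi (S : Fin N → Finset (Fin N)) (q : Fin N → Fin N → ℕ)
    (ν : Fin N → Fin N → ℝ) (i : Fin N) :
    Matrix (inIdx N S q i) (inIdx N S q i) ℝ :=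
  Matrix.blockDiagonal' fun j : {j // j ∈ S i} =>
    ((ν i j.1)⁻¹ : ℝ) • (1 : Matrix (Fin (q i j.1)) (Fin (q i j.1)) ℝ)

noncomputable def Omega (S : Fin N → Finset (Fin N)) (q : Fin N → Fin N → ℕ)
    (μ : Fin N → Fin N → ℝ) (i : Fin N) :
    Matrix (outIdx N S q i) (outIdx N S q i) ℝ :=
  Matrix.blockDiagonal' fun r : {r // i ∈ S r} =>
    ((μ r.1 i)⁻¹ : ℝ) • (1 : Matrix (Fin (q r.1 i)) (Fin (q r.1 i)) ℝ)

def condMat {k : ℕ} : (b : Bool) → Matrix (Fin k) (Fin n) ℝ →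
    Matrix (Fin (cond b k 0)) (Fin n) ℝ
  | true, M => M
  | false, _ => Matrix.of fun a _ => Fin.elim0 a

/-- `Z_i` (with the `π_i⁻¹β²I` term). -/
noncomputable def Zmat (Aρ Y : Matrix (Fin n) (Fin n) ℝ)
    (B₁ : Matrix (Fin n) (Fin p) ℝ) (B₂ : Matrix (Fin n) (Fin m) ℝ)
    (R : Matrix (Fin p) (Fin p) ℝ) (S : Fin N → Finset (Fin N))
    (ν μ : Fin N → Fin N → ℝ) (πc : Fin N → ℝ) (ν0 μ0 : Fin N → ℝ)
    (d dbar : Fin N → Bool) (β : ℝ) (i : Fin N) : Matrix (Fin n) (Fin n) ℝ :=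
  Aρ * Y + Y * Aρᵀ - B₁ * R⁻¹ * B₁ᵀ
    + ((πc i)⁻¹ * β ^ 2) • (1 : Matrix (Fin n) (Fin n) ℝ)
    + ((∑ j ∈ S i, ((ν i j)⁻¹ + (μ i j)⁻¹)) + (if d i then (ν0 i)⁻¹ else 0)
        + ∑ k ∈ Finset.univ.filter fun k => dbar k, (μ0 k)⁻¹) • (B₂ * B₂ᵀ)

/-- Index of the trailing blocks of `Π_i`. -/
abbrev restIdx (S : Fin N → Finset (Fin N)) (q : Fin N → Fin N → ℕ)
    (qd qu : Fin N → ℕ) (d dbar : Fin N → Bool) (i : Fin N) : Type :=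
  Fin n ⊕ (inIdx N S q i ⊕ (outIdx N S q i ⊕ (Fin n ⊕
    (Fin (cond (d i) (qd i) 0) ⊕ Fin (cond (dbar i) (qu i) 0)))))

/-- The off-diagonal first block row of `Π_i`:
`[Y Q̄^{1/2}, Y Ĉ_i', Y C̄_i', Y, Y C_{i0}', Y C_{0i}']`. -/
noncomputable def Brow (Y Qhalf : Matrix (Fin n) (Fin n) ℝ)
    (S : Fin N → Finset (Fin N)) (q : Fin N → Fin N → ℕ)
    (C : ∀ i j : Fin N, Matrix (Fin (q i j)) (Fin n) ℝ)
    (qd : Fin N → ℕ) (C0 : ∀ i : Fin N, Matrix (Fin (qd i)) (Fin n) ℝ)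
    (qu : Fin N → ℕ) (Cu : ∀ i : Fin N, Matrix (Fin (qu i)) (Fin n) ℝ)
    (d dbar : Fin N → Bool) (i : Fin N) :
    Matrix (Fin n) (restIdx n N S q qd qu d dbar i) ℝ :=
  Matrix.of fun a => Sum.elim ((Y * Qhalf) a)
    (Sum.elim ((Y * (Chat n N S q C i)ᵀ) a)
      (Sum.elim ((Y * (Cbar n N S q C i)ᵀ) a)
        (Sum.elim (Y a)
          (Sum.elim ((Y * (condMat n (d i) (C0 i))ᵀ) a)
            ((Y * (condMat n (dbar i) (Cu i))ᵀ) a)))))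

/-- The trailing diagonal blocks of `Π_i`:
`diag(−I, −Φ_i, −Ω_i, −π_i⁻¹I, −ν_{i0}⁻¹I, −(Nμ_{0i})⁻¹I)`. -/
noncomputable def Dblk (S : Fin N → Finset (Fin N)) (q : Fin N → Fin N → ℕ)
    (qd qu : Fin N → ℕ) (ν μ : Fin N → Fin N → ℝ) (πc : Fin N → ℝ)
    (ν0 μ0 : Fin N → ℝ) (d dbar : Fin N → Bool) (i : Fin N) :
    Matrix (restIdx n N S q qd qu d dbar i) (restIdx n N S q qd qu d dbar i) ℝ :=
  Matrix.fromBlocks (-(1 : Matrix (Fin n) (Fin n) ℝ)) 0 0 <|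
    Matrix.fromBlocks (-(Phi N S q ν i)) 0 0 <|
      Matrix.fromBlocks (-(Omega N S q μ i)) 0 0 <|
        Matrix.fromBlocks (-((πc i)⁻¹ • (1 : Matrix (Fin n) (Fin n) ℝ))) 0 0 <|
          Matrix.fromBlocks
            (-((ν0 i)⁻¹ •
              (1 : Matrix (Fin (cond (d i) (qd i) 0)) (Fin (cond (d i) (qd i) 0)) ℝ))) 0 0
            (-(((N : ℝ) * μ0 i)⁻¹ •
              (1 : Matrix (Fin (cond (dbar i) (qu i) 0)) (Fin (cond (dbar i) (qu i) 0)) ℝ)))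

/-- The matrix `Π_i` of the LMIs (15). -/
noncomputable def PiMat (Aρ Y Qhalf : Matrix (Fin n) (Fin n) ℝ)
    (B₁ : Matrix (Fin n) (Fin p) ℝ) (B₂ : Matrix (Fin n) (Fin m) ℝ)
    (R : Matrix (Fin p) (Fin p) ℝ) (S : Fin N → Finset (Fin N))
    (q : Fin N → Fin N → ℕ) (C : ∀ i j : Fin N, Matrix (Fin (q i j)) (Fin n) ℝ)
    (qd : Fin N → ℕ) (C0 : ∀ i : Fin N, Matrix (Fin (qd i)) (Fin n) ℝ)
    (qu : Fin N → ℕ) (Cu : ∀ i : Fin N, Matrix (Fin (qu i)) (Fin n) ℝ)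
    (ν μ : Fin N → Fin N → ℝ) (πc : Fin N → ℝ) (ν0 μ0 : Fin N → ℝ)
    (d dbar : Fin N → Bool) (β : ℝ) (i : Fin N) :
    Matrix (Fin n ⊕ restIdx n N S q qd qu d dbar i)
      (Fin n ⊕ restIdx n N S q qd qu d dbar i) ℝ :=
  Matrix.fromBlocks (Zmat n p m N Aρ Y B₁ B₂ R S ν μ πc ν0 μ0 d dbar β i)
    (Brow n N Y Qhalf S q C qd C0 qu Cu d dbar i)
    (Brow n N Y Qhalf S q C qd C0 qu Cu d dbar i)ᵀ
    (Dblk n N S q qd qu ν μ πc ν0 μ0 d dbar i)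

/-- Negative definiteness of a real symmetric matrix. -/
def NegDef {ι : Type*} [Fintype ι] (M : Matrix ι ι ℝ) : Prop := (-M).PosDef

/-- `Z_i` for the reduced LMI `Υ_i` (without the `π_i⁻¹β²I` term). -/
noncomputable def ZmatU (Aρ Y : Matrix (Fin n) (Fin n) ℝ)
    (B₁ : Matrix (Fin n) (Fin p) ℝ) (B₂ : Matrix (Fin n) (Fin m) ℝ)
    (R : Matrix (Fin p) (Fin p) ℝ) (S : Fin N → Finset (Fin N))
    (ν μ : Fin N → Fin N → ℝ) (ν0 μ0 : Fin N → ℝ)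
    (d dbar : Fin N → Bool) (i : Fin N) : Matrix (Fin n) (Fin n) ℝ :=
  Aρ * Y + Y * Aρᵀ - B₁ * R⁻¹ * B₁ᵀ
    + ((∑ j ∈ S i, ((ν i j)⁻¹ + (μ i j)⁻¹)) + (if d i then (ν0 i)⁻¹ else 0)
        + ∑ k ∈ Finset.univ.filter fun k => dbar k, (μ0 k)⁻¹) • (B₂ * B₂ᵀ)

/-- Index of the trailing blocks of `Υ_i`. -/
abbrev restIdxU (S : Fin N → Finset (Fin N)) (q : Fin N → Fin N → ℕ)
    (qd qu : Fin N → ℕ) (d dbar : Fin N → Bool) (i : Fin N) : Type :=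
  Fin n ⊕ (inIdx N S q i ⊕ (outIdx N S q i ⊕
    (Fin (cond (d i) (qd i) 0) ⊕ Fin (cond (dbar i) (qu i) 0))))

/-- The off-diagonal first block row of `Υ_i`:
`[Y Q̄^{1/2}, Y Ĉ_i', Y C̄_i', Y C_{i0}', Y C_{0i}']`. -/
noncomputable def BrowU (Y Qhalf : Matrix (Fin n) (Fin n) ℝ)
    (S : Fin N → Finset (Fin N)) (q : Fin N → Fin N → ℕ)
    (C : ∀ i j : Fin N, Matrix (Fin (q i j)) (Fin n) ℝ)
    (qd : Fin N → ℕ) (C0 : ∀ i : Fin N, Matrix (Fin (qd i)) (Fin n) ℝ)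
    (qu : Fin N → ℕ) (Cu : ∀ i : Fin N, Matrix (Fin (qu i)) (Fin n) ℝ)
    (d dbar : Fin N → Bool) (i : Fin N) :
    Matrix (Fin n) (restIdxU n N S q qd qu d dbar i) ℝ :=
  Matrix.of fun a => Sum.elim ((Y * Qhalf) a)
    (Sum.elim ((Y * (Chat n N S q C i)ᵀ) a)
      (Sum.elim ((Y * (Cbar n N S q C i)ᵀ) a)
        (Sum.elim ((Y * (condMat n (d i) (C0 i))ᵀ) a)
          ((Y * (condMat n (dbar i) (Cu i))ᵀ) a))))

/-- The trailing diagonal blocks of `Υ_i`: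
`diag(−I, −Φ_i, −Ω_i, −ν_{i0}⁻¹I, −(Nμ_{0i})⁻¹I)`. -/
noncomputable def DblkU (S : Fin N → Finset (Fin N)) (q : Fin N → Fin N → ℕ)
    (qd qu : Fin N → ℕ) (ν μ : Fin N → Fin N → ℝ)
    (ν0 μ0 : Fin N → ℝ) (d dbar : Fin N → Bool) (i : Fin N) :
    Matrix (restIdxU n N S q qd qu d dbar i) (restIdxU n N S q qd qu d dbar i) ℝ :=
  Matrix.fromBlocks (-(1 : Matrix (Fin n) (Fin n) ℝ)) 0 0 <|
    Matrix.fromBlocks (-(Phi N S q ν i)) 0 0 <|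
      Matrix.fromBlocks (-(Omega N S q μ i)) 0 0 <|
        Matrix.fromBlocks
          (-((ν0 i)⁻¹ •
            (1 : Matrix (Fin (cond (d i) (qd i) 0)) (Fin (cond (d i) (qd i) 0)) ℝ))) 0 0
          (-(((N : ℝ) * μ0 i)⁻¹ •
            (1 : Matrix (Fin (cond (dbar i) (qu i) 0)) (Fin (cond (dbar i) (qu i) 0)) ℝ)))

/-- The matrix `Υ_i` of the reduced coupled LMIs (27). -/
noncomputable def UpsMat (Aρ Y Qhalf : Matrix (Fin n) (Fin n) ℝ)
    (B₁ : Matrix (Fin n) (Fin p) ℝ) (B₂ : Matrix (Fin n) (Fin m) ℝ)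
    (R : Matrix (Fin p) (Fin p) ℝ) (S : Fin N → Finset (Fin N))
    (q : Fin N → Fin N → ℕ) (C : ∀ i j : Fin N, Matrix (Fin (q i j)) (Fin n) ℝ)
    (qd : Fin N → ℕ) (C0 : ∀ i : Fin N, Matrix (Fin (qd i)) (Fin n) ℝ)
    (qu : Fin N → ℕ) (Cu : ∀ i : Fin N, Matrix (Fin (qu i)) (Fin n) ℝ)
    (ν μ : Fin N → Fin N → ℝ) (ν0 μ0 : Fin N → ℝ)
    (d dbar : Fin N → Bool) (i : Fin N) :
    Matrix (Fin n ⊕ restIdxU n N S q qd qu d dbar i)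
      (Fin n ⊕ restIdxU n N S q qd qu d dbar i) ℝ :=
  Matrix.fromBlocks (ZmatU n p m N Aρ Y B₁ B₂ R S ν μ ν0 μ0 d dbar i)
    (BrowU n N Y Qhalf S q C qd C0 qu Cu d dbar i)
    (BrowU n N Y Qhalf S q C qd C0 qu Cu d dbar i)ᵀ
    (DblkU n N S q qd qu ν μ ν0 μ0 d dbar i)

lemma posDef_smul' {ι : Type*} [Fintype ι] {A : Matrix ι ι ℝ} (hA : A.PosDef) {c : ℝ}
    (hc : 0 < c) : (c • A).PosDef := by
  refine ⟨?_, fun x hx => ?_⟩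
  · unfold Matrix.IsHermitian
    rw [conjTranspose_smul, hA.1.eq]
    simp
  · exact (hA.smul hc).2 hx

lemma posDef_convex' {ι : Type*} [Fintype ι] {A B : Matrix ι ι ℝ} (hA : A.PosDef)
    (hB : B.PosDef) {γ : ℝ} (h0 : 0 ≤ γ) (h1 : γ ≤ 1) :
    (γ • A + (1 - γ) • B).PosDef := by
  rcases eq_or_lt_of_le h0 with rfl | hγ
  · simpa using hB
  rcases eq_or_lt_of_le h1 with rfl | hγ1
  · simpa using hA
  · exact (posDef_smul' hA hγ).add (posDef_smul' hB (by linarith))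

lemma zmatU_affine (Aρ : Matrix (Fin n) (Fin n) ℝ)
    (B₁ : Matrix (Fin n) (Fin p) ℝ) (B₂ : Matrix (Fin n) (Fin m) ℝ)
    (R : Matrix (Fin p) (Fin p) ℝ) (S : Fin N → Finset (Fin N))
    (Y₁ Y₂ : Matrix (Fin n) (Fin n) ℝ)
    (ν₁ μ₁ ν₂ μ₂ : Fin N → Fin N → ℝ) (ν0₁ μ0₁ ν0₂ μ0₂ : Fin N → ℝ)
    (d dbar : Fin N → Bool) (γ : ℝ) (i : Fin N) :
    ZmatU n p m N Aρ (γ • Y₁ + (1 - γ) • Y₂) B₁ B₂ R S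
        (fun i j => (γ * (ν₁ i j)⁻¹ + (1 - γ) * (ν₂ i j)⁻¹)⁻¹)
        (fun i j => (γ * (μ₁ i j)⁻¹ + (1 - γ) * (μ₂ i j)⁻¹)⁻¹)
        (fun i => (γ * (ν0₁ i)⁻¹ + (1 - γ) * (ν0₂ i)⁻¹)⁻¹)
        (fun i => (γ * (μ0₁ i)⁻¹ + (1 - γ) * (μ0₂ i)⁻¹)⁻¹) d dbar i
      = γ • ZmatU n p m N Aρ Y₁ B₁ B₂ R S ν₁ μ₁ ν0₁ μ0₁ d dbar i
        + (1 - γ) • ZmatU n p m N Aρ Y₂ B₁ B₂ R S ν₂ μ₂ ν0₂ μ0₂ d dbar i := by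
  unfold ZmatU
  have h1 : (∑ j ∈ S i, (((γ * (ν₁ i j)⁻¹ + (1 - γ) * (ν₂ i j)⁻¹)⁻¹)⁻¹
        + ((γ * (μ₁ i j)⁻¹ + (1 - γ) * (μ₂ i j)⁻¹)⁻¹)⁻¹))
      = γ * (∑ j ∈ S i, ((ν₁ i j)⁻¹ + (μ₁ i j)⁻¹))
        + (1 - γ) * (∑ j ∈ S i, ((ν₂ i j)⁻¹ + (μ₂ i j)⁻¹)) := by
    rw [Finset.mul_sum, Finset.mul_sum, ← Finset.sum_add_distrib]
    exact Finset.sum_congr rfl fun j _ => by rw [inv_inv, inv_inv]; ring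
  have h2 : (if d i then ((γ * (ν0₁ i)⁻¹ + (1 - γ) * (ν0₂ i)⁻¹)⁻¹)⁻¹ else 0)
      = γ * (if d i then (ν0₁ i)⁻¹ else 0) + (1 - γ) * (if d i then (ν0₂ i)⁻¹ else 0) := by
    split_ifs
    · rw [inv_inv]
    · ring
  have h3 : (∑ k ∈ Finset.univ.filter fun k => dbar k,
        ((γ * (μ0₁ k)⁻¹ + (1 - γ) * (μ0₂ k)⁻¹)⁻¹)⁻¹)
      = γ * (∑ k ∈ Finset.univ.filter fun k => dbar k, (μ0₁ k)⁻¹)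
        + (1 - γ) * (∑ k ∈ Finset.univ.filter fun k => dbar k, (μ0₂ k)⁻¹) := by
    rw [Finset.mul_sum, Finset.mul_sum, ← Finset.sum_add_distrib]
    exact Finset.sum_congr rfl fun k _ => by rw [inv_inv]
  rw [h1, h2, h3]
  simp only [Matrix.mul_add, Matrix.add_mul, Matrix.mul_smul, Matrix.smul_mul]
  module

lemma browU_affine (Qhalf : Matrix (Fin n) (Fin n) ℝ)
    (S : Fin N → Finset (Fin N)) (q : Fin N → Fin N → ℕ)
    (C : ∀ i j : Fin N, Matrix (Fin (q i j)) (Fin n) ℝ)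
    (qd : Fin N → ℕ) (C0 : ∀ i : Fin N, Matrix (Fin (qd i)) (Fin n) ℝ)
    (qu : Fin N → ℕ) (Cu : ∀ i : Fin N, Matrix (Fin (qu i)) (Fin n) ℝ)
    (d dbar : Fin N → Bool)
    (Y₁ Y₂ : Matrix (Fin n) (Fin n) ℝ) (γ : ℝ) (i : Fin N) :
    BrowU n N (γ • Y₁ + (1 - γ) • Y₂) Qhalf S q C qd C0 qu Cu d dbar i
      = γ • BrowU n N Y₁ Qhalf S q C qd C0 qu Cu d dbar i
        + (1 - γ) • BrowU n N Y₂ Qhalf S q C qd C0 qu Cu d dbar i := by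
  ext a b
  rcases b with b | b | b | b | b <;>
    simp [BrowU, Matrix.add_mul, Matrix.smul_mul, Matrix.add_apply, Matrix.smul_apply]

lemma phi_affine (S : Fin N → Finset (Fin N)) (q : Fin N → Fin N → ℕ)
    (ν₁ ν₂ : Fin N → Fin N → ℝ) (γ : ℝ) (i : Fin N) :
    Phi N S q (fun i j => (γ * (ν₁ i j)⁻¹ + (1 - γ) * (ν₂ i j)⁻¹)⁻¹) i
      = γ • Phi N S q ν₁ i + (1 - γ) • Phi N S q ν₂ i := by
  unfold Phi
  have h : (fun j : {j // j ∈ S i} =>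
        ((((γ * (ν₁ i j.1)⁻¹ + (1 - γ) * (ν₂ i j.1)⁻¹)⁻¹)⁻¹ : ℝ) •
          (1 : Matrix (Fin (q i j.1)) (Fin (q i j.1)) ℝ)))
      = (γ • fun j : {j // j ∈ S i} =>
            (((ν₁ i j.1)⁻¹ : ℝ) • (1 : Matrix (Fin (q i j.1)) (Fin (q i j.1)) ℝ)))
        + ((1 - γ) • fun j : {j // j ∈ S i} =>
            (((ν₂ i j.1)⁻¹ : ℝ) • (1 : Matrix (Fin (q i j.1)) (Fin (q i j.1)) ℝ))) := by
    funext j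
    simp only [Pi.add_apply, Pi.smul_apply, smul_smul, ← add_smul, inv_inv]
  rw [h, Matrix.blockDiagonal'_add, Matrix.blockDiagonal'_smul, Matrix.blockDiagonal'_smul]

lemma omega_affine (S : Fin N → Finset (Fin N)) (q : Fin N → Fin N → ℕ)
    (μ₁ μ₂ : Fin N → Fin N → ℝ) (γ : ℝ) (i : Fin N) :
    Omega N S q (fun i j => (γ * (μ₁ i j)⁻¹ + (1 - γ) * (μ₂ i j)⁻¹)⁻¹) i
      = γ • Omega N S q μ₁ i + (1 - γ) • Omega N S q μ₂ i := by
  unfold Omega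
  have h : (fun r : {r // i ∈ S r} =>
        ((((γ * (μ₁ r.1 i)⁻¹ + (1 - γ) * (μ₂ r.1 i)⁻¹)⁻¹)⁻¹ : ℝ) •
          (1 : Matrix (Fin (q r.1 i)) (Fin (q r.1 i)) ℝ)))
      = (γ • fun r : {r // i ∈ S r} =>
            (((μ₁ r.1 i)⁻¹ : ℝ) • (1 : Matrix (Fin (q r.1 i)) (Fin (q r.1 i)) ℝ)))
        + ((1 - γ) • fun r : {r // i ∈ S r} =>
            (((μ₂ r.1 i)⁻¹ : ℝ) • (1 : Matrix (Fin (q r.1 i)) (Fin (q r.1 i)) ℝ))) := by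
    funext r
    simp only [Pi.add_apply, Pi.smul_apply, smul_smul, ← add_smul, inv_inv]
  rw [h, Matrix.blockDiagonal'_add, Matrix.blockDiagonal'_smul, Matrix.blockDiagonal'_smul]

lemma fb_conv {l o : Type*} (γ : ℝ) (A₁ A₂ : Matrix l l ℝ) (D₁ D₂ : Matrix o o ℝ) :
    Matrix.fromBlocks (γ • A₁ + (1 - γ) • A₂) 0 0 (γ • D₁ + (1 - γ) • D₂)
      = γ • Matrix.fromBlocks A₁ 0 0 D₁ + (1 - γ) • Matrix.fromBlocks A₂ 0 0 D₂ := by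
  rw [Matrix.fromBlocks_smul, Matrix.fromBlocks_smul, Matrix.fromBlocks_add]
  simp

lemma fb_conv' {l l' o o' : Type*} (γ : ℝ) (A₁ A₂ : Matrix l l' ℝ) (B₁ B₂ : Matrix l o' ℝ)
    (C₁ C₂ : Matrix o l' ℝ) (D₁ D₂ : Matrix o o' ℝ) :
    Matrix.fromBlocks (γ • A₁ + (1 - γ) • A₂) (γ • B₁ + (1 - γ) • B₂)
        (γ • C₁ + (1 - γ) • C₂) (γ • D₁ + (1 - γ) • D₂)
      = γ • Matrix.fromBlocks A₁ B₁ C₁ D₁ + (1 - γ) • Matrix.fromBlocks A₂ B₂ C₂ D₂ := by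
  rw [Matrix.fromBlocks_smul, Matrix.fromBlocks_smul, Matrix.fromBlocks_add]

lemma dblkU_affine (S : Fin N → Finset (Fin N)) (q : Fin N → Fin N → ℕ)
    (qd qu : Fin N → ℕ)
    (ν₁ μ₁ ν₂ μ₂ : Fin N → Fin N → ℝ) (ν0₁ μ0₁ ν0₂ μ0₂ : Fin N → ℝ)
    (d dbar : Fin N → Bool) (γ : ℝ) (i : Fin N) :
    DblkU n N S q qd qu
        (fun i j => (γ * (ν₁ i j)⁻¹ + (1 - γ) * (ν₂ i j)⁻¹)⁻¹)
        (fun i j => (γ * (μ₁ i j)⁻¹ + (1 - γ) * (μ₂ i j)⁻¹)⁻¹)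
        (fun i => (γ * (ν0₁ i)⁻¹ + (1 - γ) * (ν0₂ i)⁻¹)⁻¹)
        (fun i => (γ * (μ0₁ i)⁻¹ + (1 - γ) * (μ0₂ i)⁻¹)⁻¹) d dbar i
      = γ • DblkU n N S q qd qu ν₁ μ₁ ν0₁ μ0₁ d dbar i
        + (1 - γ) • DblkU n N S q qd qu ν₂ μ₂ ν0₂ μ0₂ d dbar i := by
  unfold DblkU
  have hν0 : (((γ * (ν0₁ i)⁻¹ + (1 - γ) * (ν0₂ i)⁻¹)⁻¹)⁻¹ •
        (1 : Matrix (Fin (cond (d i) (qd i) 0)) (Fin (cond (d i) (qd i) 0)) ℝ))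
      = γ • ((ν0₁ i)⁻¹ • 1) + (1 - γ) • ((ν0₂ i)⁻¹ • 1) := by
    rw [smul_smul, smul_smul, ← add_smul, inv_inv]
  have hμ0 : (((N : ℝ) * (γ * (μ0₁ i)⁻¹ + (1 - γ) * (μ0₂ i)⁻¹)⁻¹)⁻¹ •
        (1 : Matrix (Fin (cond (dbar i) (qu i) 0)) (Fin (cond (dbar i) (qu i) 0)) ℝ))
      = γ • (((N : ℝ) * μ0₁ i)⁻¹ • 1) + (1 - γ) • (((N : ℝ) * μ0₂ i)⁻¹ • 1) := by
    rw [smul_smul, smul_smul, ← add_smul, mul_inv, mul_inv, mul_inv, inv_inv]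
    ring_nf
  conv_lhs => rw [show -(1 : Matrix (Fin n) (Fin n) ℝ)
        = γ • (-(1 : Matrix (Fin n) (Fin n) ℝ)) + (1 - γ) • (-1) from by module,
      show -(Phi N S q (fun i j => (γ * (ν₁ i j)⁻¹ + (1 - γ) * (ν₂ i j)⁻¹)⁻¹) i)
        = γ • (-(Phi N S q ν₁ i)) + (1 - γ) • (-(Phi N S q ν₂ i)) from by
          rw [phi_affine]; module,
      show -(Omega N S q (fun i j => (γ * (μ₁ i j)⁻¹ + (1 - γ) * (μ₂ i j)⁻¹)⁻¹) i)
        = γ • (-(Omega N S q μ₁ i)) + (1 - γ) • (-(Omega N S q μ₂ i)) from by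
          rw [omega_affine]; module,
      show -(((γ * (ν0₁ i)⁻¹ + (1 - γ) * (ν0₂ i)⁻¹)⁻¹)⁻¹ •
          (1 : Matrix (Fin (cond (d i) (qd i) 0)) (Fin (cond (d i) (qd i) 0)) ℝ))
        = γ • (-((ν0₁ i)⁻¹ • 1)) + (1 - γ) • (-((ν0₂ i)⁻¹ • 1)) from by
          rw [hν0]; module,
      show -(((N : ℝ) * (γ * (μ0₁ i)⁻¹ + (1 - γ) * (μ0₂ i)⁻¹)⁻¹)⁻¹ •
          (1 : Matrix (Fin (cond (dbar i) (qu i) 0)) (Fin (cond (dbar i) (qu i) 0)) ℝ))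
        = γ • (-(((N : ℝ) * μ0₁ i)⁻¹ • 1)) + (1 - γ) • (-(((N : ℝ) * μ0₂ i)⁻¹ • 1)) from by
          rw [hμ0]; module,
      fb_conv, fb_conv, fb_conv, fb_conv]

lemma upsMat_affine (Aρ Qhalf : Matrix (Fin n) (Fin n) ℝ)
    (B₁ : Matrix (Fin n) (Fin p) ℝ) (B₂ : Matrix (Fin n) (Fin m) ℝ)
    (R : Matrix (Fin p) (Fin p) ℝ)
    (S : Fin N → Finset (Fin N)) (q : Fin N → Fin N → ℕ)
    (C : ∀ i j : Fin N, Matrix (Fin (q i j)) (Fin n) ℝ)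
    (qd : Fin N → ℕ) (C0 : ∀ i : Fin N, Matrix (Fin (qd i)) (Fin n) ℝ)
    (qu : Fin N → ℕ) (Cu : ∀ i : Fin N, Matrix (Fin (qu i)) (Fin n) ℝ)
    (d dbar : Fin N → Bool)
    (Y₁ Y₂ : Matrix (Fin n) (Fin n) ℝ)
    (ν₁ μ₁ ν₂ μ₂ : Fin N → Fin N → ℝ) (ν0₁ μ0₁ ν0₂ μ0₂ : Fin N → ℝ)
    (γ : ℝ) (i : Fin N) :
    UpsMat n p m N Aρ (γ • Y₁ + (1 - γ) • Y₂) Qhalf B₁ B₂ R S q C qd C0 qu Cu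
        (fun i j => (γ * (ν₁ i j)⁻¹ + (1 - γ) * (ν₂ i j)⁻¹)⁻¹)
        (fun i j => (γ * (μ₁ i j)⁻¹ + (1 - γ) * (μ₂ i j)⁻¹)⁻¹)
        (fun i => (γ * (ν0₁ i)⁻¹ + (1 - γ) * (ν0₂ i)⁻¹)⁻¹)
        (fun i => (γ * (μ0₁ i)⁻¹ + (1 - γ) * (μ0₂ i)⁻¹)⁻¹) d dbar i
      = γ • UpsMat n p m N Aρ Y₁ Qhalf B₁ B₂ R S q C qd C0 qu Cu ν₁ μ₁ ν0₁ μ0₁ d dbar i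
        + (1 - γ) • UpsMat n p m N Aρ Y₂ Qhalf B₁ B₂ R S q C qd C0 qu Cu ν₂ μ₂ ν0₂ μ0₂
            d dbar i := by
  unfold UpsMat
  rw [zmatU_affine, browU_affine, dblkU_affine, Matrix.transpose_add, Matrix.transpose_smul,
    Matrix.transpose_smul, fb_conv']

/-- **Interpolation preserves LMI feasibility.**  If two tuples of a symmetric
positive definite matrix and positive scalars each satisfy `Υ_i < 0` for every
follower `i`, then for every `γ ∈ [0,1]` the tuple obtained by convex interpolation
of the `Y`'s and harmonic interpolation of the scalars also satisfies `Υ_i < 0`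
for every `i`. -/
theorem interpolation_preserves_LMI (Aρ Qhalf : Matrix (Fin n) (Fin n) ℝ)
    (B₁ : Matrix (Fin n) (Fin p) ℝ) (B₂ : Matrix (Fin n) (Fin m) ℝ)
    (R : Matrix (Fin p) (Fin p) ℝ) (hR : R.PosDef)
    (S : Fin N → Finset (Fin N)) (q : Fin N → Fin N → ℕ)
    (C : ∀ i j : Fin N, Matrix (Fin (q i j)) (Fin n) ℝ)
    (qd : Fin N → ℕ) (C0 : ∀ i : Fin N, Matrix (Fin (qd i)) (Fin n) ℝ)
    (qu : Fin N → ℕ) (Cu : ∀ i : Fin N, Matrix (Fin (qu i)) (Fin n) ℝ)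
    (d dbar : Fin N → Bool)
    (Y₁ Y₂ : Matrix (Fin n) (Fin n) ℝ) (hY₁ : Y₁.PosDef) (hY₂ : Y₂.PosDef)
    (ν₁ μ₁ ν₂ μ₂ : Fin N → Fin N → ℝ) (ν0₁ μ0₁ ν0₂ μ0₂ : Fin N → ℝ)
    (hν₁ : ∀ i j, j ∈ S i → 0 < ν₁ i j) (hμ₁ : ∀ i j, j ∈ S i → 0 < μ₁ i j)
    (hν₂ : ∀ i j, j ∈ S i → 0 < ν₂ i j) (hμ₂ : ∀ i j, j ∈ S i → 0 < μ₂ i j)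
    (hν0₁ : ∀ i, d i = true → 0 < ν0₁ i) (hν0₂ : ∀ i, d i = true → 0 < ν0₂ i)
    (hμ0₁ : ∀ i, dbar i = true → 0 < μ0₁ i) (hμ0₂ : ∀ i, dbar i = true → 0 < μ0₂ i)
    (hLMI₁ : ∀ i, NegDef (UpsMat n p m N Aρ Y₁ Qhalf B₁ B₂ R S q C qd C0 qu Cu
      ν₁ μ₁ ν0₁ μ0₁ d dbar i))
    (hLMI₂ : ∀ i, NegDef (UpsMat n p m N Aρ Y₂ Qhalf B₁ B₂ R S q C qd C0 qu Cu
      ν₂ μ₂ ν0₂ μ0₂ d dbar i)) :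
    ∀ γ ∈ Set.Icc (0 : ℝ) 1, ∀ i,
      NegDef (UpsMat n p m N Aρ (γ • Y₁ + (1 - γ) • Y₂) Qhalf B₁ B₂ R S q C qd C0 qu Cu
        (fun i j => (γ * (ν₁ i j)⁻¹ + (1 - γ) * (ν₂ i j)⁻¹)⁻¹)
        (fun i j => (γ * (μ₁ i j)⁻¹ + (1 - γ) * (μ₂ i j)⁻¹)⁻¹)
        (fun i => (γ * (ν0₁ i)⁻¹ + (1 - γ) * (ν0₂ i)⁻¹)⁻¹)
        (fun i => (γ * (μ0₁ i)⁻¹ + (1 - γ) * (μ0₂ i)⁻¹)⁻¹) d dbar i) := by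
  intro γ hγ i
  unfold NegDef
  rw [upsMat_affine]
  have hneg : -(γ • UpsMat n p m N Aρ Y₁ Qhalf B₁ B₂ R S q C qd C0 qu Cu ν₁ μ₁ ν0₁ μ0₁ d dbar i
        + (1 - γ) • UpsMat n p m N Aρ Y₂ Qhalf B₁ B₂ R S q C qd C0 qu Cu ν₂ μ₂ ν0₂ μ0₂ d dbar i)
      = γ • (-(UpsMat n p m N Aρ Y₁ Qhalf B₁ B₂ R S q C qd C0 qu Cu ν₁ μ₁ ν0₁ μ0₁ d dbar i))
        + (1 - γ) • (-(UpsMat n p m N Aρ Y₂ Qhalf B₁ B₂ R S q C qd C0 qu Cu ν₂ μ₂ ν0₂ μ0₂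
            d dbar i)) := by
    rw [neg_add, smul_neg, smul_neg]
  rw [hneg]
  exact posDef_convex' (hLMI₁ i) (hLMI₂ i) hγ.1 hγ.2

end LFT
end

section
/- Control-cost identity and bound for the consensus protocol. Under Assumption 1, let ϑ = (L₀^c + G)⁻¹𝟙_N, Θ = diag(ϑ), σ = ½ λ_min(Θ⁻¹(L₀^c+G) + (L₀^c+G)'Θ⁻¹), λ̂ = λ_max((L₀^c+G)'Θ⁻²(L₀^c+G)), and let Y = Y' > 0, R = R' > 0, B₁ ∈ ℝ^{n×p}. For states x₀, x₁, …, x_N ∈ ℝⁿ set e_i = x₀ − x_i and e = (e₁',…,e_N')', and let u_i = −K_i( Σ_{j∈S_i^c}(x_j − x_i) + g_i(x₀ − x_i) ) with K_i = −(ϑ_i σ)⁻¹ R⁻¹ B₁' Y⁻¹. Then Σ_{i=1}^{N} u_i' R u_i = e'( ((L₀^c+G)'Θ⁻²(L₀^c+G)) ⊗ (σ⁻² Y⁻¹ B₁ R⁻¹ B₁' Y⁻¹) )e, and consequently Σ_{i=1}^{N} u_i' R u_i ≤ (λ̂/σ²) Σ_{i=1}^{N} e_i' Y⁻¹ B₁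 R⁻¹ B₁' Y⁻¹ e_i. -/
open Matrix BigOperators Kronecker

/-- Real adjacency matrix (`Adj i j = true` iff follower `i` receives information
from follower `j`). -/
def adjMat (N : ℕ) (Adj : Fin N → Fin N → Bool) : Matrix (Fin N) (Fin N) ℝ :=
  Matrix.of fun i j => if Adj i j then 1 else 0

/-- The Laplacian `L₀^c = diag(A₀^c 𝟙_N) − A₀^c`. -/
def lap (N : ℕ) (Adj : Fin N → Fin N → Bool) : Matrix (Fin N) (Fin N) ℝ :=
  Matrix.diagonal (fun i => ∑ j, adjMat N Adj i j) - adjMat N Adj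

/-- The pinning matrix `G = diag(g)`. -/
def pin (N : ℕ) (g : Fin N → Bool) : Matrix (Fin N) (Fin N) ℝ :=
  Matrix.diagonal fun i => if g i then 1 else 0

/-- Reachability along directed edges (edge from `a` to `b` iff `Adj b a = true`). -/
def Reach (N : ℕ) (Adj : Fin N → Fin N → Bool) (r i : Fin N) : Prop :=
  Relation.ReflTransGen (fun a b => Adj b a = true) r i

/-- Assumption 1: the communication subgraph contains a spanning tree whose root
is a pinned node. -/
def PinnedSpanningTree (N : ℕ) (Adj : Fin N → Fin N → Bool) (g : Fin N → Bool) : Prop :=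
  ∃ r, g r = true ∧ ∀ i, Reach N Adj r i

/-- `ϑ = (L₀^c + G)⁻¹ 𝟙_N`. -/
noncomputable def thetaVec (N : ℕ) (Adj : Fin N → Fin N → Bool) (g : Fin N → Bool) :
    Fin N → ℝ :=
  ((lap N Adj + pin N g)⁻¹).mulVec fun _ => 1

/-- Smallest eigenvalue of a (symmetric) real matrix. -/
noncomputable def lamMin {ι : Type*} [Fintype ι] (M : Matrix ι ι ℝ) : ℝ :=
  sInf {r : ℝ | ∃ x : ι → ℝ, x ≠ 0 ∧ M.mulVec x = r • x}

/-- Largest eigenvalue of a (symmetric) real matrix. -/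
noncomputable def lamMax {ι : Type*} [Fintype ι] (M : Matrix ι ι ℝ) : ℝ :=
  sSup {r : ℝ | ∃ x : ι → ℝ, x ≠ 0 ∧ M.mulVec x = r • x}

/-- `σ = ½ λ_min(Θ⁻¹(L₀^c+G) + (L₀^c+G)'Θ⁻¹)`. -/
noncomputable def sigmaConst (N : ℕ) (Adj : Fin N → Fin N → Bool) (g : Fin N → Bool) : ℝ :=
  (1 / 2) * lamMin ((Matrix.diagonal (thetaVec N Adj g))⁻¹ * (lap N Adj + pin N g)
    + (lap N Adj + pin N g)ᵀ * (Matrix.diagonal (thetaVec N Adj g))⁻¹)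

/-- `λ̂ = λ_max((L₀^c+G)'Θ⁻²(L₀^c+G))`. -/
noncomputable def lamHatConst (N : ℕ) (Adj : Fin N → Fin N → Bool) (g : Fin N → Bool) : ℝ :=
  lamMax ((lap N Adj + pin N g)ᵀ * (Matrix.diagonal (thetaVec N Adj g))⁻¹
    * (Matrix.diagonal (thetaVec N Adj g))⁻¹ * (lap N Adj + pin N g))

theorem row_formula {N : ℕ} (Adj : Fin N → Fin N → Bool) (g : Fin N → Bool) (v : Fin N → ℝ)
    (i : Fin N) :
    ((lap N Adj + pin N g).mulVec v) i
      = ((∑ j, (if Adj i j then (1:ℝ) else 0)) + (if g i then (1:ℝ) else 0)) * v i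
        - ∑ j, (if Adj i j then (1:ℝ) else 0) * v j := by
  simp only [lap, pin, adjMat, Matrix.mulVec, dotProduct, Matrix.add_apply,
    Matrix.sub_apply, Matrix.diagonal_apply, Matrix.of_apply, ite_mul, zero_mul,
    sub_mul, add_mul, Finset.sum_sub_distrib, Finset.sum_add_distrib,
    Finset.sum_ite_eq, Finset.mem_univ, if_true]
  split <;> ring
theorem lapPin_ker {N : ℕ} {Adj : Fin N → Fin N → Bool} {g : Fin N → Bool}
    (hPin : PinnedSpanningTree N Adj g) (v : Fin N → ℝ)
    (hv : (lap N Adj + pin N g).mulVec v = 0) : v = 0 := by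
  by_contra hne
  obtain ⟨i₁, hi₁⟩ := Function.ne_iff.mp hne
  obtain ⟨i₀, -, hmax⟩ := Finset.exists_max_image Finset.univ (fun i => |v i|)
    ⟨i₁, Finset.mem_univ i₁⟩
  set c : ℝ := |v i₀| with hc
  have hcpos : 0 < c := lt_of_lt_of_le (abs_pos.mpr hi₁) (hmax i₁ (Finset.mem_univ i₁))
  set w : Fin N → ℝ := if 0 < v i₀ then v else -v with hw
  have hw0 : (lap N Adj + pin N g).mulVec w = 0 := by
    rw [hw]; split
    · exact hv
    · rw [Matrix.mulVec_neg, hv, neg_zero]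
  have hwle : ∀ j, w j ≤ c := by
    intro j
    have : |w j| = |v j| := by rw [hw]; split <;> simp
    calc w j ≤ |w j| := le_abs_self _
    _ = |v j| := this
    _ ≤ c := hmax j (Finset.mem_univ j)
  have hwc : w i₀ = c := by
    rw [hw, hc]; split
    · exact (abs_of_pos (by assumption)).symm
    · exact (abs_of_nonpos (not_lt.mp (by assumption))).symm
  have key : ∀ i, w i = c → (g i = false ∧ ∀ j, Adj i j = true → w j = c) := by
    intro i hi
    have hrow : ((lap N Adj + pin N g).mulVec w) i = 0 := congrFun hw0 i
    rw [row_formula] at hrow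
    have hsum : (∑ j, (if Adj i j then (1:ℝ) else 0) * w j)
        = ((∑ j, (if Adj i j then (1:ℝ) else 0)) + (if g i then (1:ℝ) else 0)) * c := by
      rw [← hi]; linarith [hrow]
    have hterm : ∀ j ∈ Finset.univ, (if Adj i j then (1:ℝ) else 0) * w j
        ≤ (if Adj i j then (1:ℝ) else 0) * c := by
      intro j _
      exact mul_le_mul_of_nonneg_left (hwle j) (by positivity)
    have hle : (∑ j, (if Adj i j then (1:ℝ) else 0) * w j)
        ≤ (∑ j, (if Adj i j then (1:ℝ) else 0)) * c := by
      rw [Finset.sum_mul]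
      exact Finset.sum_le_sum hterm
    have hgf : g i = false := by
      by_contra hgi
      rw [Bool.not_eq_false] at hgi
      have hgv : (if g i then (1:ℝ) else 0) = 1 := by simp [hgi]
      rw [hgv] at hsum
      nlinarith
    refine ⟨hgf, ?_⟩
    have hgv : (if g i then (1:ℝ) else 0) = 0 := by simp [hgf]
    rw [hgv, add_zero] at hsum
    intro j hj
    by_contra hne2
    have hlt : (if Adj i j then (1:ℝ) else 0) * w j < (if Adj i j then (1:ℝ) else 0) * c := by
      rw [hj]; simpa using lt_of_le_of_ne (hwle j) hne2
    have hstrict := Finset.sum_lt_sum hterm ⟨j, Finset.mem_univ j, hlt⟩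
    rw [← Finset.sum_mul] at hstrict
    linarith [hsum, hstrict]
  obtain ⟨r, hgr, hreach⟩ := hPin
  have hprop : ∀ i, Relation.ReflTransGen (fun a b => Adj b a = true) r i → w i = c → w r = c := by
    intro i h
    induction h with
    | refl => exact fun h => h
    | tail _ hbc ih => exact fun hic => ih ((key _ hic).2 _ hbc)
  have hfin : g r = false := (key r (hprop i₀ (hreach i₀) hwc)).1
  rw [hgr] at hfin; exact absurd hfin (by simp)

theorem lapPin_det_ne {N : ℕ} {Adj : Fin N → Fin N → Bool} {g : Fin N → Bool}
    (hPin : PinnedSpanningTree N Adj g) : (lap N Adj + pin N g).det ≠ 0 := by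
  intro h
  obtain ⟨v, hv0, hv⟩ := (Matrix.exists_mulVec_eq_zero_iff).mpr h
  exact hv0 (lapPin_ker hPin v hv)

theorem theta_eq {N : ℕ} {Adj : Fin N → Fin N → Bool} {g : Fin N → Bool}
    (hPin : PinnedSpanningTree N Adj g) :
    (lap N Adj + pin N g).mulVec (thetaVec N Adj g) = fun _ => 1 := by
  unfold thetaVec
  rw [Matrix.mulVec_mulVec, Matrix.mul_nonsing_inv _ (isUnit_iff_ne_zero.mpr (lapPin_det_ne hPin)),
    Matrix.one_mulVec]

theorem one_le_theta {N : ℕ} {Adj : Fin N → Fin N → Bool} {g : Fin N → Bool}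
    (hPin : PinnedSpanningTree N Adj g) (i : Fin N) : 1 ≤ thetaVec N Adj g i := by
  set ϑ := thetaVec N Adj g with hϑ
  obtain ⟨i₀, -, hmin⟩ := Finset.exists_min_image Finset.univ ϑ ⟨i, Finset.mem_univ i⟩
  have hrow : ((lap N Adj + pin N g).mulVec ϑ) i₀ = 1 := congrFun (theta_eq hPin) i₀
  rw [row_formula] at hrow
  have hge : (∑ j, (if Adj i₀ j then (1:ℝ) else 0)) * ϑ i₀
      ≤ ∑ j, (if Adj i₀ j then (1:ℝ) else 0) * ϑ j := by
    rw [Finset.sum_mul]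
    refine Finset.sum_le_sum fun j _ => ?_
    exact mul_le_mul_of_nonneg_left (hmin j (Finset.mem_univ j)) (by positivity)
  by_cases hgi : g i₀ = true
  · have hgv : (if g i₀ then (1:ℝ) else 0) = 1 := by simp [hgi]
    rw [hgv] at hrow
    have h1 : 1 ≤ ϑ i₀ := by nlinarith
    exact le_trans h1 (hmin i (Finset.mem_univ i))
  · rw [Bool.not_eq_true] at hgi
    have hgv : (if g i₀ then (1:ℝ) else 0) = 0 := by simp [hgi]
    rw [hgv, add_zero] at hrow
    nlinarith
theorem diag_inv {N : ℕ} (v : Fin N → ℝ) (hv : ∀ i, v i ≠ 0) :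
    (Matrix.diagonal v)⁻¹ = Matrix.diagonal (fun i => (v i)⁻¹) := by
  apply Matrix.inv_eq_right_inv
  rw [Matrix.diagonal_mul_diagonal]
  convert Matrix.diagonal_one with i
  exact mul_inv_cancel₀ (hv i)

theorem sum4_swap {α β : Type*} [Fintype α] [Fintype β] (f : β → β → α → α → ℝ) :
    (∑ k : β, ∑ l : β, ∑ j : α, ∑ i : α, f k l j i)
      = ∑ i : α, ∑ j : α, ∑ k : β, ∑ l : β, f k l j i :=
  calc (∑ k : β, ∑ l : β, ∑ j : α, ∑ i : α, f k l j i)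
      = ∑ k : β, ∑ l : β, ∑ i : α, ∑ j : α, f k l j i :=
        Finset.sum_congr rfl fun k _ => Finset.sum_congr rfl fun l _ => Finset.sum_comm
    _ = ∑ k : β, ∑ i : α, ∑ l : β, ∑ j : α, f k l j i :=
        Finset.sum_congr rfl fun k _ => Finset.sum_comm
    _ = ∑ i : α, ∑ k : β, ∑ l : β, ∑ j : α, f k l j i := Finset.sum_comm
    _ = ∑ i : α, ∑ k : β, ∑ j : α, ∑ l : β, f k l j i :=
        Finset.sum_congr rfl fun i _ => Finset.sum_congr rfl fun k _ => Finset.sum_comm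
    _ = ∑ i : α, ∑ j : α, ∑ k : β, ∑ l : β, f k l j i :=
        Finset.sum_congr rfl fun i _ => Finset.sum_comm

theorem bilin_sum {N n : ℕ} (Q : Matrix (Fin n) (Fin n) ℝ) (c : Fin N → ℝ)
    (v : Fin N → Fin n → ℝ) :
    (fun k => ∑ i, c i * v i k) ⬝ᵥ Q.mulVec (fun k => ∑ j, c j * v j k)
      = ∑ i, ∑ j, c i * c j * (v i ⬝ᵥ Q.mulVec (v j)) := by
  simp only [dotProduct, Matrix.mulVec, Finset.mul_sum, Finset.sum_mul]
  refine (sum4_swap (fun k l j i => c i * v i k * (Q k l * (c j * v j l)))).trans ?_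
  refine Finset.sum_congr rfl fun i _ => Finset.sum_congr rfl fun j _ =>
    Finset.sum_congr rfl fun k _ => Finset.sum_congr rfl fun l _ => ?_
  ring
section Spectral
variable {N : ℕ} {M : Matrix (Fin N) (Fin N) ℝ}

theorem spec_entry (hM : M.IsHermitian) (i j : Fin N) :
    M i j = ∑ t, (hM.eigenvectorUnitary : Matrix (Fin N) (Fin N) ℝ) i t
      * hM.eigenvalues t * (hM.eigenvectorUnitary : Matrix (Fin N) (Fin N) ℝ) j t := by
  conv_lhs => rw [hM.spectral_theorem]
  simp only [Unitary.conjStarAlgAut_apply, Matrix.mul_apply, Matrix.mul_diagonal, Matrix.diagonal_apply, Matrix.star_apply,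
    star_trivial, Function.comp_apply, RCLike.ofReal_real_eq_id, id_eq, ite_mul, zero_mul,
    mul_ite, mul_zero, Finset.sum_ite_eq, Finset.sum_ite_eq', Finset.mem_univ, if_true]

theorem orth_entry (hM : M.IsHermitian) (i j : Fin N) :
    ∑ t, (hM.eigenvectorUnitary : Matrix (Fin N) (Fin N) ℝ) i t
      * (hM.eigenvectorUnitary : Matrix (Fin N) (Fin N) ℝ) j t = if i = j then 1 else 0 := by
  have h := Matrix.mem_unitaryGroup_iff.mp hM.eigenvectorUnitary.2
  have h2 := congrFun (congrFun h i) j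
  simp only [Matrix.mul_apply, Matrix.star_apply, star_trivial, Matrix.one_apply] at h2
  exact h2

end Spectral
section Spectral2
variable {N : ℕ} {M : Matrix (Fin N) (Fin N) ℝ}

theorem spec_sum (hM : M.IsHermitian) (X : Fin N → Fin N → ℝ) :
    ∑ i, ∑ j, M i j * X i j
      = ∑ t, hM.eigenvalues t * ∑ i, ∑ j,
          (hM.eigenvectorUnitary : Matrix (Fin N) (Fin N) ℝ) i t
          * (hM.eigenvectorUnitary : Matrix (Fin N) (Fin N) ℝ) j t * X i j := by
  simp only [Finset.mul_sum]
  calc ∑ i, ∑ j, M i j * X i j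
      = ∑ i, ∑ j, ∑ t, hM.eigenvalues t
          * ((hM.eigenvectorUnitary : Matrix (Fin N) (Fin N) ℝ) i t
            * (hM.eigenvectorUnitary : Matrix (Fin N) (Fin N) ℝ) j t * X i j) := by
        refine Finset.sum_congr rfl fun i _ => Finset.sum_congr rfl fun j _ => ?_
        rw [spec_entry hM i j, Finset.sum_mul]
        exact Finset.sum_congr rfl fun t _ => by ring
    _ = ∑ i, ∑ t, ∑ j, hM.eigenvalues t
          * ((hM.eigenvectorUnitary : Matrix (Fin N) (Fin N) ℝ) i t
            * (hM.eigenvectorUnitary : Matrix (Fin N) (Fin N) ℝ) j t * X i j) :=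
        Finset.sum_congr rfl fun i _ => Finset.sum_comm
    _ = ∑ t, ∑ i, ∑ j, hM.eigenvalues t
          * ((hM.eigenvectorUnitary : Matrix (Fin N) (Fin N) ℝ) i t
            * (hM.eigenvectorUnitary : Matrix (Fin N) (Fin N) ℝ) j t * X i j) :=
        Finset.sum_comm

theorem orth_sum (hM : M.IsHermitian) (X : Fin N → Fin N → ℝ) :
    (∑ t, ∑ i, ∑ j, (hM.eigenvectorUnitary : Matrix (Fin N) (Fin N) ℝ) i t
      * (hM.eigenvectorUnitary : Matrix (Fin N) (Fin N) ℝ) j t * X i j)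
      = ∑ i, X i i := by
  calc (∑ t, ∑ i, ∑ j, (hM.eigenvectorUnitary : Matrix (Fin N) (Fin N) ℝ) i t
      * (hM.eigenvectorUnitary : Matrix (Fin N) (Fin N) ℝ) j t * X i j)
      = ∑ i, ∑ t, ∑ j, (hM.eigenvectorUnitary : Matrix (Fin N) (Fin N) ℝ) i t
          * (hM.eigenvectorUnitary : Matrix (Fin N) (Fin N) ℝ) j t * X i j := Finset.sum_comm
    _ = ∑ i, ∑ j, ∑ t, (hM.eigenvectorUnitary : Matrix (Fin N) (Fin N) ℝ) i t
          * (hM.eigenvectorUnitary : Matrix (Fin N) (Fin N) ℝ) j t * X i j :=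
        Finset.sum_congr rfl fun i _ => Finset.sum_comm
    _ = ∑ i, ∑ j, (if i = j then (1:ℝ) else 0) * X i j := by
        refine Finset.sum_congr rfl fun i _ => Finset.sum_congr rfl fun j _ => ?_
        rw [← orth_entry hM i j, Finset.sum_mul]
    _ = ∑ i, X i i := by
        refine Finset.sum_congr rfl fun i _ => ?_
        simp [ite_mul]

theorem dot_expand (M : Matrix (Fin N) (Fin N) ℝ) (x : Fin N → ℝ) :
    x ⬝ᵥ M.mulVec x = ∑ i, ∑ j, M i j * (x i * x j) := by
  simp only [dotProduct, Matrix.mulVec, Finset.mul_sum]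
  exact Finset.sum_congr rfl fun i _ => Finset.sum_congr rfl fun j _ => by ring

theorem dot_self_pos {x : Fin N → ℝ} (hx : x ≠ 0) : 0 < x ⬝ᵥ x := by
  have h0 : 0 ≤ x ⬝ᵥ x := Finset.sum_nonneg fun i _ => mul_self_nonneg (x i)
  rcases h0.lt_or_eq with h | h
  · exact h
  · exact absurd ((dotProduct_self_eq_zero).mp h.symm) hx

theorem eig_le_lamMax (hM : M.IsHermitian) (hN : N ≠ 0) (t : Fin N) :
    hM.eigenvalues t ≤ lamMax M := by
  have hne : (Finset.univ : Finset (Fin N)).Nonempty := Finset.univ_nonempty_iff.mpr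
    (Fin.pos_iff_nonempty.mp (Nat.pos_of_ne_zero hN))
  set L := Finset.univ.sup' hne hM.eigenvalues with hL
  have hbdd : ∀ r ∈ {r : ℝ | ∃ x : Fin N → ℝ, x ≠ 0 ∧ M.mulVec x = r • x}, r ≤ L := by
    rintro r ⟨x, hx0, hxe⟩
    have h1 : x ⬝ᵥ M.mulVec x = r * (x ⬝ᵥ x) := by
      rw [hxe, dotProduct_smul]; rfl
    have h2 : x ⬝ᵥ M.mulVec x ≤ L * (x ⬝ᵥ x) := by
      rw [dot_expand, spec_sum hM]
      have h3 : ∀ s : Fin N, (∑ i, ∑ j, (hM.eigenvectorUnitary : Matrix (Fin N) (Fin N) ℝ) i s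
          * (hM.eigenvectorUnitary : Matrix (Fin N) (Fin N) ℝ) j s * (x i * x j))
          = (∑ i, (hM.eigenvectorUnitary : Matrix (Fin N) (Fin N) ℝ) i s * x i)
            * (∑ j, (hM.eigenvectorUnitary : Matrix (Fin N) (Fin N) ℝ) j s * x j) := by
        intro s
        rw [Finset.sum_mul_sum]
        exact Finset.sum_congr rfl fun i _ => Finset.sum_congr rfl fun j _ => by ring
      calc (∑ s, hM.eigenvalues s * ∑ i, ∑ j,
              (hM.eigenvectorUnitary : Matrix (Fin N) (Fin N) ℝ) i s
              * (hM.eigenvectorUnitary : Matrix (Fin N) (Fin N) ℝ) j s * (x i * x j))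
          ≤ ∑ s, L * ∑ i, ∑ j, (hM.eigenvectorUnitary : Matrix (Fin N) (Fin N) ℝ) i s
              * (hM.eigenvectorUnitary : Matrix (Fin N) (Fin N) ℝ) j s * (x i * x j) := by
            refine Finset.sum_le_sum fun s _ => ?_
            have hnn : 0 ≤ ∑ i, ∑ j, (hM.eigenvectorUnitary : Matrix (Fin N) (Fin N) ℝ) i s
                * (hM.eigenvectorUnitary : Matrix (Fin N) (Fin N) ℝ) j s * (x i * x j) := by
              rw [h3 s]; exact mul_self_nonneg _
            exact mul_le_mul_of_nonneg_right (Finset.le_sup' hM.eigenvalues (Finset.mem_univ s))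
              hnn
        _ = L * (x ⬝ᵥ x) := by
            rw [← Finset.mul_sum, orth_sum hM]
            congr 1
    nlinarith [dot_self_pos hx0, h1, h2]
  have hmem : hM.eigenvalues t ∈ {r : ℝ | ∃ x : Fin N → ℝ, x ≠ 0 ∧ M.mulVec x = r • x} := by
    refine ⟨⇑(hM.eigenvectorBasis t), ?_, hM.mulVec_eigenvectorBasis t⟩
    have := hM.eigenvectorBasis.orthonormal.ne_zero t
    intro hc
    apply this
    ext k
    exact congrFun hc k
  exact le_csSup ⟨L, hbdd⟩ hmem

end Spectral2
theorem dot_conj {m k : ℕ} (F : Matrix (Fin m) (Fin k) ℝ) (Rm : Matrix (Fin m) (Fin m) ℝ)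
    (v : Fin k → ℝ) :
    (F.mulVec v) ⬝ᵥ Rm.mulVec (F.mulVec v) = v ⬝ᵥ (Fᵀ * Rm * F).mulVec v := by
  rw [← Matrix.mulVec_mulVec, ← Matrix.mulVec_mulVec, Matrix.dotProduct_mulVec v Fᵀ,
    Matrix.vecMul_transpose]

theorem quad_bound {N n : ℕ} {M : Matrix (Fin N) (Fin N) ℝ} (hM : M.IsHermitian)
    (P : Matrix (Fin n) (Fin n) ℝ) (hP : ∀ w, 0 ≤ w ⬝ᵥ P.mulVec w) (e : Fin N → Fin n → ℝ) :
    ∑ i, ∑ j, M i j * (e i ⬝ᵥ P.mulVec (e j)) ≤ lamMax M * ∑ i, e i ⬝ᵥ P.mulVec (e i) := by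
  rcases Nat.eq_zero_or_pos N with h0 | hpos
  · subst h0
    simp
  have hN : N ≠ 0 := Nat.pos_iff_ne_zero.mp hpos
  rw [spec_sum hM]
  have hinner : ∀ t : Fin N, (∑ i, ∑ j, (hM.eigenvectorUnitary : Matrix (Fin N) (Fin N) ℝ) i t
      * (hM.eigenvectorUnitary : Matrix (Fin N) (Fin N) ℝ) j t * (e i ⬝ᵥ P.mulVec (e j)))
      = (fun k => ∑ i, (hM.eigenvectorUnitary : Matrix (Fin N) (Fin N) ℝ) i t * e i k) ⬝ᵥ
        P.mulVec (fun k => ∑ j, (hM.eigenvectorUnitary : Matrix (Fin N) (Fin N) ℝ) j t * e j k) :=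
    fun t => (bilin_sum P (fun i => (hM.eigenvectorUnitary : Matrix (Fin N) (Fin N) ℝ) i t) e).symm
  calc (∑ t, hM.eigenvalues t * ∑ i, ∑ j,
          (hM.eigenvectorUnitary : Matrix (Fin N) (Fin N) ℝ) i t
          * (hM.eigenvectorUnitary : Matrix (Fin N) (Fin N) ℝ) j t * (e i ⬝ᵥ P.mulVec (e j)))
      ≤ ∑ t, lamMax M * ∑ i, ∑ j, (hM.eigenvectorUnitary : Matrix (Fin N) (Fin N) ℝ) i t
          * (hM.eigenvectorUnitary : Matrix (Fin N) (Fin N) ℝ) j t * (e i ⬝ᵥ P.mulVec (e j)) := by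
        refine Finset.sum_le_sum fun t _ => ?_
        have hnn : 0 ≤ ∑ i, ∑ j, (hM.eigenvectorUnitary : Matrix (Fin N) (Fin N) ℝ) i t
            * (hM.eigenvectorUnitary : Matrix (Fin N) (Fin N) ℝ) j t
            * (e i ⬝ᵥ P.mulVec (e j)) := by
          rw [hinner t]; exact hP _
        exact mul_le_mul_of_nonneg_right (eig_le_lamMax hM hN t) hnn
    _ = lamMax M * ∑ i, e i ⬝ᵥ P.mulVec (e i) := by
        rw [← Finset.mul_sum, orth_sum hM]
/-- **Control-cost identity and bound for the consensus protocol.**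
Under Assumption 1, with `e_i = x₀ − x_i` and
`u_i = −K_i(Σ_{j∈Sᵢᶜ}(x_j − x_i) + g_i(x₀ − x_i))`, `K_i = −(ϑ_i σ)⁻¹R⁻¹B₁'Y⁻¹`:
`Σᵢ uᵢ'Ruᵢ = e'(((L₀^c+G)'Θ⁻²(L₀^c+G)) ⊗ (σ⁻²Y⁻¹B₁R⁻¹B₁'Y⁻¹))e`, and consequently
`Σᵢ uᵢ'Ruᵢ ≤ (λ̂/σ²) Σᵢ eᵢ'Y⁻¹B₁R⁻¹B₁'Y⁻¹eᵢ`. -/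
theorem consensus_control_cost (N n p : ℕ)
    (Adj : Fin N → Fin N → Bool) (hloop : ∀ i, Adj i i = false)
    (g : Fin N → Bool) (hPin : PinnedSpanningTree N Adj g)
    (Y : Matrix (Fin n) (Fin n) ℝ) (hY : Y.PosDef)
    (R : Matrix (Fin p) (Fin p) ℝ) (hR : R.PosDef)
    (B₁ : Matrix (Fin n) (Fin p) ℝ)
    (x₀ : Fin n → ℝ) (x : Fin N → Fin n → ℝ)
    (u : Fin N → Fin p → ℝ)
    (hu : ∀ i, u i = -((-((thetaVec N Adj g i * sigmaConst N Adj g)⁻¹ •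
        (R⁻¹ * B₁ᵀ * Y⁻¹))).mulVec
        ((∑ j ∈ Finset.univ.filter fun j => Adj i j, (x j - x i))
          + (if g i then (1 : ℝ) else 0) • (x₀ - x i)))) :
    (∑ i, u i ⬝ᵥ R.mulVec (u i))
      = (fun ik : Fin N × Fin n => (x₀ - x ik.1) ik.2) ⬝ᵥ
          ((((lap N Adj + pin N g)ᵀ * (Matrix.diagonal (thetaVec N Adj g))⁻¹
              * (Matrix.diagonal (thetaVec N Adj g))⁻¹ * (lap N Adj + pin N g)) ⊗ₖ
            (((sigmaConst N Adj g) ^ 2)⁻¹ • (Y⁻¹ * B₁ * R⁻¹ * B₁ᵀ * Y⁻¹))).mulVec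
            fun ik : Fin N × Fin n => (x₀ - x ik.1) ik.2)
    ∧ (∑ i, u i ⬝ᵥ R.mulVec (u i))
        ≤ (lamHatConst N Adj g / (sigmaConst N Adj g) ^ 2) *
            ∑ i, (x₀ - x i) ⬝ᵥ (Y⁻¹ * B₁ * R⁻¹ * B₁ᵀ * Y⁻¹).mulVec (x₀ - x i) := by
  classical
  set A := lap N Adj + pin N g with hAd
  set ϑ := thetaVec N Adj g with hϑd
  set σ := sigmaConst N Adj g with hσd
  set P := Y⁻¹ * B₁ * R⁻¹ * B₁ᵀ * Y⁻¹ with hPd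
  set F := R⁻¹ * B₁ᵀ * Y⁻¹ with hFd
  set ζ : Fin N → Fin n → ℝ := fun i k => ∑ j, A i j * (x₀ k - x j k) with hζd
  have hϑ0 : ∀ a, ϑ a ≠ 0 := fun a =>
    ne_of_gt (lt_of_lt_of_le one_pos (one_le_theta hPin a))
  have hD : (Matrix.diagonal ϑ)⁻¹ = Matrix.diagonal (fun a => (ϑ a)⁻¹) := diag_inv ϑ hϑ0
  have hYt : Yᵀ = Y := by
    rw [← Matrix.conjTranspose_eq_transpose_of_trivial]; exact hY.1
  have hRt : Rᵀ = R := by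
    rw [← Matrix.conjTranspose_eq_transpose_of_trivial]; exact hR.1
  have hRdet : IsUnit R.det := isUnit_iff_ne_zero.mpr (ne_of_gt hR.det_pos)
  have hFRF : Fᵀ * R * F = P := by
    rw [hFd, hPd, Matrix.transpose_mul, Matrix.transpose_mul, Matrix.transpose_transpose,
      Matrix.transpose_nonsing_inv, Matrix.transpose_nonsing_inv, hYt, hRt]
    simp only [Matrix.mul_assoc]
    rw [Matrix.mul_nonsing_inv_cancel_left _ _ hRdet]
  have hzeta : ∀ i, ((∑ j ∈ Finset.univ.filter fun j => Adj i j, (x j - x i))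
      + (if g i then (1:ℝ) else 0) • (x₀ - x i)) = ζ i := by
    intro i
    funext k
    have hr := row_formula Adj g (fun j => x₀ k - x j k) i
    have hrhs : ζ i k = ((lap N Adj + pin N g).mulVec (fun j => x₀ k - x j k)) i := rfl
    rw [hrhs, hr]
    simp only [Finset.sum_apply, Pi.add_apply, Pi.smul_apply, Pi.sub_apply, smul_eq_mul]
    rw [Finset.sum_filter]
    rw [Finset.sum_congr rfl fun j (_ : j ∈ Finset.univ) =>
      (show (if Adj i j then (x j k - x i k) else 0)
        = (if Adj i j then (1:ℝ) else 0) * (x₀ k - x i k)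
          - (if Adj i j then (1:ℝ) else 0) * (x₀ k - x j k) by split <;> ring)]
    rw [Finset.sum_sub_distrib, ← Finset.sum_mul]
    ring
  have hu2 : ∀ i, u i = ((ϑ i)⁻¹ * σ⁻¹) • F.mulVec (ζ i) := by
    intro i
    rw [hu i, Matrix.neg_mulVec, neg_neg, hzeta i, Matrix.smul_mulVec, mul_inv]
  have hcost : ∀ i, u i ⬝ᵥ R.mulVec (u i)
      = ((ϑ i)⁻¹ * (ϑ i)⁻¹ * (σ⁻¹ * σ⁻¹)) * (ζ i ⬝ᵥ P.mulVec (ζ i)) := by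
    intro i
    rw [hu2 i, Matrix.mulVec_smul, smul_dotProduct, dotProduct_smul,
      dot_conj, hFRF, smul_eq_mul, smul_eq_mul]
    ring
  have hbilinA : ∀ a, ζ a ⬝ᵥ P.mulVec (ζ a)
      = ∑ i, ∑ j, A a i * A a j * ((x₀ - x i) ⬝ᵥ P.mulVec (x₀ - x j)) := by
    intro a
    exact bilin_sum P (fun j => A a j) (fun j => x₀ - x j)
  have hMij : ∀ i j, (Aᵀ * (Matrix.diagonal ϑ)⁻¹ * (Matrix.diagonal ϑ)⁻¹ * A) i j
      = ∑ a, ((ϑ a)⁻¹ * (ϑ a)⁻¹) * (A a i * A a j) := by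
    intro i j
    rw [hD]
    simp only [Matrix.mul_apply, Matrix.transpose_apply, Matrix.diagonal_apply, mul_ite,
      ite_mul, mul_zero, zero_mul, Finset.sum_ite_eq, Finset.sum_ite_eq', Finset.mem_univ,
      if_true]
    exact Finset.sum_congr rfl fun a _ => by ring
  have hsum1 : (∑ i, ∑ j, (Aᵀ * (Matrix.diagonal ϑ)⁻¹ * (Matrix.diagonal ϑ)⁻¹ * A) i j
        * ((x₀ - x i) ⬝ᵥ P.mulVec (x₀ - x j)))
      = ∑ a, ((ϑ a)⁻¹ * (ϑ a)⁻¹) * (ζ a ⬝ᵥ P.mulVec (ζ a)) := by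
    calc (∑ i, ∑ j, (Aᵀ * (Matrix.diagonal ϑ)⁻¹ * (Matrix.diagonal ϑ)⁻¹ * A) i j
          * ((x₀ - x i) ⬝ᵥ P.mulVec (x₀ - x j)))
        = ∑ i, ∑ j, ∑ a, ((ϑ a)⁻¹ * (ϑ a)⁻¹)
            * (A a i * A a j * ((x₀ - x i) ⬝ᵥ P.mulVec (x₀ - x j))) := by
          refine Finset.sum_congr rfl fun i _ => Finset.sum_congr rfl fun j _ => ?_
          rw [hMij i j, Finset.sum_mul]
          exact Finset.sum_congr rfl fun a _ => by ring
      _ = ∑ i, ∑ a, ∑ j, ((ϑ a)⁻¹ * (ϑ a)⁻¹)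
            * (A a i * A a j * ((x₀ - x i) ⬝ᵥ P.mulVec (x₀ - x j))) :=
          Finset.sum_congr rfl fun i _ => Finset.sum_comm
      _ = ∑ a, ∑ i, ∑ j, ((ϑ a)⁻¹ * (ϑ a)⁻¹)
            * (A a i * A a j * ((x₀ - x i) ⬝ᵥ P.mulVec (x₀ - x j))) := Finset.sum_comm
      _ = ∑ a, ((ϑ a)⁻¹ * (ϑ a)⁻¹) * (ζ a ⬝ᵥ P.mulVec (ζ a)) := by
          refine Finset.sum_congr rfl fun a _ => ?_
          rw [hbilinA a, Finset.mul_sum]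
          exact Finset.sum_congr rfl fun i _ => by rw [Finset.mul_sum]
  have hid : (∑ i, u i ⬝ᵥ R.mulVec (u i))
      = (σ ^ 2)⁻¹ * ∑ i, ∑ j, (Aᵀ * (Matrix.diagonal ϑ)⁻¹ * (Matrix.diagonal ϑ)⁻¹ * A) i j
          * ((x₀ - x i) ⬝ᵥ P.mulVec (x₀ - x j)) := by
    rw [hsum1, sq, mul_inv, Finset.mul_sum]
    refine Finset.sum_congr rfl fun i _ => ?_
    rw [hcost i]
    ring
  have hkron : ((fun ik : Fin N × Fin n => (x₀ - x ik.1) ik.2) ⬝ᵥ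
          (((Aᵀ * (Matrix.diagonal ϑ)⁻¹ * (Matrix.diagonal ϑ)⁻¹ * A) ⊗ₖ
            ((σ ^ 2)⁻¹ • P)).mulVec fun ik : Fin N × Fin n => (x₀ - x ik.1) ik.2))
      = (σ ^ 2)⁻¹ * ∑ i, ∑ j, (Aᵀ * (Matrix.diagonal ϑ)⁻¹ * (Matrix.diagonal ϑ)⁻¹ * A) i j
          * ((x₀ - x i) ⬝ᵥ P.mulVec (x₀ - x j)) := by
    simp only [dotProduct, Matrix.mulVec, Matrix.kroneckerMap_apply, Matrix.smul_apply,
      smul_eq_mul, Fintype.sum_prod_type, Finset.mul_sum, Finset.sum_mul]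
    refine (Finset.sum_congr rfl fun i _ => Finset.sum_comm).trans ?_
    refine Finset.sum_congr rfl fun i _ => Finset.sum_congr rfl fun j _ =>
      Finset.sum_congr rfl fun k _ => Finset.sum_congr rfl fun l _ => by ring
  constructor
  · exact hid.trans hkron.symm
  · have hMH : (Aᵀ * (Matrix.diagonal ϑ)⁻¹ * (Matrix.diagonal ϑ)⁻¹ * A).IsHermitian := by
      rw [hD]
      have h := Matrix.isHermitian_conjTranspose_mul_self (Matrix.diagonal (fun a => (ϑ a)⁻¹) * A)
      rw [Matrix.conjTranspose_eq_transpose_of_trivial, Matrix.transpose_mul,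
        Matrix.diagonal_transpose] at h
      simp only [Matrix.mul_assoc] at h ⊢
      exact h
    have hPpsd : ∀ w : Fin n → ℝ, 0 ≤ w ⬝ᵥ P.mulVec w := by
      intro w
      rw [← hFRF, ← dot_conj]
      have h := hR.posSemidef.dotProduct_mulVec_nonneg (F.mulVec w)
      simpa using h
    have hqb := quad_bound hMH P hPpsd (fun i => x₀ - x i)
    have hlam : lamHatConst N Adj g
        = lamMax (Aᵀ * (Matrix.diagonal ϑ)⁻¹ * (Matrix.diagonal ϑ)⁻¹ * A) := rfl
    calc (∑ i, u i ⬝ᵥ R.mulVec (u i))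
        = (σ ^ 2)⁻¹ * ∑ i, ∑ j, (Aᵀ * (Matrix.diagonal ϑ)⁻¹ * (Matrix.diagonal ϑ)⁻¹ * A) i j
            * ((x₀ - x i) ⬝ᵥ P.mulVec (x₀ - x j)) := hid
      _ ≤ (σ ^ 2)⁻¹ * (lamMax (Aᵀ * (Matrix.diagonal ϑ)⁻¹ * (Matrix.diagonal ϑ)⁻¹ * A)
            * ∑ i, (x₀ - x i) ⬝ᵥ P.mulVec (x₀ - x i)) := by
          refine mul_le_mul_of_nonneg_left ?_ (by positivity)
          exact hqb
      _ = (lamHatConst N Adj g / σ ^ 2) * ∑ i, (x₀ - x i) ⬝ᵥ P.mulVec (x₀ - x i) := by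
          rw [hlam, div_eq_mul_inv]
          ring
end
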